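/- Let T_f, T_c > 0 and w : [0, T_f] → ℝ be continuous. Define E(α) = ∫₀^{T_f} ((1 - exp(-α T_f))/(α T_c)) exp(ατ) w(τ) dτ for α > 0 and E(0) = (T_f/T_c)∫₀^{T_f} w(τ)dτ. Then E is differentiable at 0 with E'(0) = (T_f/T_c)∫₀^{T_f}(τ - T_f/2)·w(τ) dτ. -/

import Mathlib

open intervalIntegral MeasureTheory Asymptotics Set Metric

lemma aux_phi_deriv (Tf Tc : ℝ) (hTf : 0 < Tf) (hTc : 0 < Tc) :
    HasDerivAt (fun α : ℝ => if α = 0 then Tf / Tc else (1 - Real.exp (-α * Tf)) / (α * Tc))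
      (-(Tf ^ 2) / (2 * Tc)) 0 := by
  rw [hasDerivAt_iff_isLittleO]
  simp only [sub_zero, smul_eq_mul, reduceIte]
  have h2 : (fun α : ℝ => α ^ 2) =o[nhds (0 : ℝ)] (fun α : ℝ => α) := by
    have h0 : (fun α : ℝ => α) =o[nhds (0 : ℝ)] (fun _ => (1 : ℝ)) :=
      (Asymptotics.isLittleO_one_iff ℝ).mpr (continuous_id.tendsto 0)
    have := (Asymptotics.isBigO_refl (fun α : ℝ => α) (nhds 0)).mul_isLittleO h0
    simpa [pow_two, mul_one] using this
  refine (Asymptotics.isBigO_iff.mpr ⟨2 * Tf ^ 3 / (9 * Tc), ?_⟩).trans_isLittleO h2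
  have hmem : ∀ᶠ α : ℝ in nhds 0, |α| ≤ 1 / Tf := by
    have hball := Metric.ball_mem_nhds (0 : ℝ) (by positivity : (0:ℝ) < 1 / Tf)
    filter_upwards [hball] with α hα
    rw [Metric.mem_ball, dist_zero_right, Real.norm_eq_abs] at hα
    exact hα.le
  filter_upwards [hmem] with α hα
  rcases eq_or_ne α 0 with rfl | hα0
  · simp
  · rw [if_neg hα0]
    have hx1 : |(-α * Tf)| ≤ 1 := by
      rw [abs_mul, abs_neg]
      calc |α| * |Tf| ≤ (1 / Tf) * Tf := by
            apply mul_le_mul hα (le_of_eq (abs_of_pos hTf)) (abs_nonneg _) (by positivity)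
        _ = 1 := by field_simp
    have hexp := Real.exp_bound hx1 (by norm_num : 0 < 3)
    have hsum : ∑ m ∈ Finset.range 3, (-α * Tf) ^ m / (m.factorial : ℝ)
        = 1 + (-α * Tf) + (α * Tf) ^ 2 / 2 := by
      rw [Finset.sum_range_succ, Finset.sum_range_succ, Finset.sum_range_succ]
      norm_num [Nat.factorial]
    rw [hsum] at hexp
    set r : ℝ := Real.exp (-α * Tf) - (1 + (-α * Tf) + (α * Tf) ^ 2 / 2) with hr
    have hrabs : |r| ≤ |α| ^ 3 * Tf ^ 3 * (2 / 9) := by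
      calc |r| ≤ |(-α * Tf)| ^ 3 * ((3:ℕ).succ / ((3:ℕ).factorial * 3)) := hexp
        _ = |α| ^ 3 * Tf ^ 3 * (2 / 9) := by
            rw [abs_mul, abs_neg, mul_pow, abs_of_pos hTf]
            norm_num [Nat.factorial]
    have hkey : (1 - Real.exp (-α * Tf)) / (α * Tc) - Tf / Tc - α * (-(Tf ^ 2) / (2 * Tc))
        = -r / (α * Tc) := by
      rw [hr]
      field_simp
      ring
    rw [hkey]
    rw [Real.norm_eq_abs, abs_div, abs_neg, abs_mul, abs_of_pos hTc]
    rw [div_le_iff₀ (by positivity : (0:ℝ) < |α| * Tc)]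
    calc |r| ≤ |α| ^ 3 * Tf ^ 3 * (2 / 9) := hrabs
      _ = 2 * Tf ^ 3 / (9 * Tc) * ‖α ^ 2‖ * (|α| * Tc) := by
          rw [Real.norm_eq_abs, abs_pow]
          field_simp

theorem stmt_16 (Tf Tc : ℝ) (hTf : 0 < Tf) (hTc : 0 < Tc)
    (w : ℝ → ℝ) (hw : ContinuousOn w (Set.Icc 0 Tf))
    (E : ℝ → ℝ)
    (hE : ∀ α : ℝ, E α =
      if α = 0 then (Tf / Tc) * ∫ τ in (0:ℝ)..Tf, w τ
      else ∫ τ in (0:ℝ)..Tf,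
        ((1 - Real.exp (-α * Tf)) / (α * Tc)) * Real.exp (α * τ) * w τ) :
    HasDerivAt E ((Tf / Tc) * ∫ τ in (0:ℝ)..Tf, (τ - Tf / 2) * w τ) 0 := by
  have hIoc : Set.uIoc (0:ℝ) Tf = Set.Ioc 0 Tf := Set.uIoc_of_le hTf.le
  have hIcc : Set.uIcc (0:ℝ) Tf = Set.Icc 0 Tf := Set.uIcc_of_le hTf.le
  have hwIoc : ContinuousOn w (Set.Ioc 0 Tf) := hw.mono Set.Ioc_subset_Icc_self
  set I : ℝ → ℝ := fun α => ∫ τ in (0:ℝ)..Tf, Real.exp (α * τ) * w τ with hI_def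
  have hI : HasDerivAt I (∫ τ in (0:ℝ)..Tf, (τ * Real.exp (0 * τ)) * w τ) 0 := by
    have := intervalIntegral.hasDerivAt_integral_of_dominated_loc_of_deriv_le
      (𝕜 := ℝ) (μ := volume) (a := 0) (b := Tf) (x₀ := (0:ℝ)) (s := Metric.ball 0 1)
      (F := fun x t => Real.exp (x * t) * w t)
      (F' := fun x t => (t * Real.exp (x * t)) * w t)
      (bound := fun t => Tf * Real.exp Tf * |w t|)
      (Metric.ball_mem_nhds 0 one_pos) ?_ ?_ ?_ ?_ ?_ ?_
    · exact this.2
    · filter_upwards with x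
      rw [hIoc]
      exact (((Real.continuous_exp.comp (continuous_const.mul continuous_id)).continuousOn.mul
        hwIoc)).aestronglyMeasurable measurableSet_Ioc
    · rw [intervalIntegrable_iff]
      apply ContinuousOn.integrableOn_Icc ((Real.continuous_exp.comp
        (continuous_const.mul continuous_id)).continuousOn.mul hw) |>.mono_set
      rw [hIoc]; exact Set.Ioc_subset_Icc_self
    · rw [hIoc]
      exact ((continuous_id.mul (Real.continuous_exp.comp
        (continuous_const.mul continuous_id))).continuousOn.mul
        hwIoc).aestronglyMeasurable measurableSet_Ioc
    · filter_upwards with t ht x hx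
      rw [hIoc] at ht
      rw [Metric.mem_ball, Real.dist_eq, sub_zero] at hx
      rw [Real.norm_eq_abs, abs_mul, abs_mul, Real.abs_exp]
      have ht0 : 0 < t := ht.1
      have htTf : t ≤ Tf := ht.2
      have hxt : x * t ≤ Tf := by
        calc x * t ≤ |x * t| := le_abs_self _
          _ = |x| * |t| := abs_mul _ _
          _ ≤ 1 * Tf := by
              apply mul_le_mul hx.le (by rwa [abs_of_pos ht0]) (abs_nonneg _) zero_le_one
          _ = Tf := one_mul Tf
      have h1 : |t| ≤ Tf := by rwa [abs_of_pos ht0]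
      have h2 : Real.exp (x * t) ≤ Real.exp Tf := Real.exp_le_exp.mpr hxt
      have := mul_le_mul (mul_le_mul h1 h2 (Real.exp_pos _).le hTf.le)
        (le_refl |w t|) (abs_nonneg _) (by positivity)
      linarith
    · rw [intervalIntegrable_iff]
      apply ContinuousOn.integrableOn_Icc (continuousOn_const.mul hw.abs) |>.mono_set
      rw [hIoc]; exact Set.Ioc_subset_Icc_self
    · filter_upwards with t _ x _
      have hd : HasDerivAt (fun x : ℝ => x * t) t x := by
        simpa using (hasDerivAt_id x).mul_const t
      have := (hd.exp).mul_const (w t)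
      refine this.congr_deriv ?_
      ring
  set φ : ℝ → ℝ := fun α => if α = 0 then Tf / Tc else (1 - Real.exp (-α * Tf)) / (α * Tc)
    with hφ_def
  have hφ : HasDerivAt φ (-(Tf ^ 2) / (2 * Tc)) 0 := aux_phi_deriv Tf Tc hTf hTc
  have hEq : E = fun α => φ α * I α := by
    funext α
    rw [hE α]
    rcases eq_or_ne α 0 with rfl | hα0
    · simp only [hφ_def, hI_def, reduceIte]
      congr 1
      refine (intervalIntegral.integral_congr fun τ _ => ?_).symm
      simp
    · simp only [hφ_def, hI_def, if_neg hα0]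
      rw [← intervalIntegral.integral_const_mul]
      exact intervalIntegral.integral_congr fun τ _ => (mul_assoc _ _ _)
  have hmul := hφ.mul hI
  rw [show φ * I = fun α => φ α * I α from rfl, ← hEq] at hmul
  refine hmul.congr_deriv (Eq.symm ?_)
  have hφ0 : φ 0 = Tf / Tc := by rw [hφ_def]; simp
  have hI0 : I 0 = ∫ τ in (0:ℝ)..Tf, w τ := by
    rw [hI_def]
    exact intervalIntegral.integral_congr fun τ _ => by simp
  have hd0 : (∫ τ in (0:ℝ)..Tf, (τ * Real.exp (0 * τ)) * w τ)
      = ∫ τ in (0:ℝ)..Tf, τ * w τ := intervalIntegral.integral_congr fun τ _ => by simp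
  rw [hφ0, hI0, hd0]
  have hint1 : IntervalIntegrable (fun τ => τ * w τ) volume 0 Tf := by
    apply ContinuousOn.intervalIntegrable
    rw [hIcc]
    exact continuous_id.continuousOn.mul hw
  have hint2 : IntervalIntegrable (fun τ => (Tf / 2) * w τ) volume 0 Tf := by
    apply ContinuousOn.intervalIntegrable
    rw [hIcc]
    exact continuousOn_const.mul hw
  have hsplit : (∫ τ in (0:ℝ)..Tf, (τ - Tf / 2) * w τ)
      = (∫ τ in (0:ℝ)..Tf, τ * w τ) - (Tf / 2) * ∫ τ in (0:ℝ)..Tf, w τ := by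
    rw [← intervalIntegral.integral_const_mul, ← intervalIntegral.integral_sub hint1 hint2]
    exact intervalIntegral.integral_congr fun τ _ => by ring
  rw [hsplit]
  field_simp
  ring
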